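/- Let M be an (ε, δ) sample differentially private (n → k) compression scheme with compression function κ, let D be a probability distribution over a domain Z, and let E ⊆ Z be any event with p = D(E). For an input sample S = (z_1,…,z_n) ~ D^n, let Z(S) = (1/k)·Σ_{i ∈ κ(S)} 1[z_i ∈ E] be the fraction of selected indices whose data points belong to E. Then p·e^{−ε} − δn ≤ E[Z] ≤ p·e^{ε} + δn, where the expectation is over S and the internal randomness of κ. -/

import Mathlib

open MeasureTheory

/-- The probability that a sample from the PMF `μ` lands in the set `T`. -/
noncomputable def prob {α : Type*} (μ : PMF α) (T : Set α) : ℝ :=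
  (μ.toOuterMeasure T).toReal

/-- Two samples are neighbors if they differ in exactly one entry. -/
def Neighbors {Z : Type*} {n : ℕ} (S S' : Fin n → Z) : Prop :=
  ∃ i, S i ≠ S' i ∧ ∀ j, j ≠ i → S j = S' j

section PMFHelp

lemma prob_nonneg' {α : Type*} (μ : PMF α) (T : Set α) : 0 ≤ prob μ T :=
  ENNReal.toReal_nonneg

lemma prob_le_one' {α : Type*} (μ : PMF α) (T : Set α) : prob μ T ≤ 1 := by
  have h : μ.toOuterMeasure T ≤ 1 := by
    rw [PMF.toOuterMeasure_apply]
    calc ∑' x, T.indicator μ x ≤ ∑' x, μ x :=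
          ENNReal.tsum_le_tsum (fun x => Set.indicator_le_self T _ x)
    _ = 1 := μ.tsum_coe
  calc prob μ T ≤ (1 : ENNReal).toReal := ENNReal.toReal_mono ENNReal.one_ne_top h
  _ = 1 := by simp

lemma prob_eq_sum' {α : Type*} [Fintype α] (μ : PMF α) (q : α → Prop) [DecidablePred q] :
    prob μ {x | q x} = ∑ x ∈ Finset.univ.filter q, (μ x).toReal := by
  rw [prob, PMF.toOuterMeasure_apply, tsum_fintype,
    ENNReal.toReal_sum (fun a _ => by
      by_cases h : q a <;> simp [Set.indicator_apply, Set.mem_setOf_eq, h, PMF.apply_ne_top]),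
    Finset.sum_filter]
  apply Finset.sum_congr rfl
  intro x _
  by_cases h : q x <;> simp [Set.indicator_apply, Set.mem_setOf_eq, h]

lemma sum_pmf_one {α : Type*} [Fintype α] (μ : PMF α) :
    ∑ x : α, (μ x).toReal = 1 := by
  rw [← ENNReal.toReal_sum (fun a _ => μ.apply_ne_top a), ← tsum_fintype (L := SummationFilter.unconditional _), μ.tsum_coe,
    ENNReal.toReal_one]

end PMFHelp


section Helpers

variable {Z : Type*} [MeasurableSpace Z]

lemma integrable_of_bdd {α : Type*} [MeasurableSpace α] {μ : Measure α} [IsFiniteMeasure μ]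
    {f : α → ℝ} (hm : Measurable f)
    {C : ℝ} (hb : ∀ x, ‖f x‖ ≤ C) : Integrable f μ :=
  Integrable.mono' (integrable_const C) hm.aestronglyMeasurable (Filter.Eventually.of_forall hb)

lemma measurable_update_joint {n : ℕ} (i : Fin n) :
    Measurable fun q : (Fin n → Z) × Z => Function.update q.1 i q.2 := by
  apply measurable_pi_lambda
  intro j
  by_cases h : j = i
  · subst h
    simp only [Function.update_self]
    exact measurable_snd
  · simp only [Function.update_of_ne h]
    exact (measurable_pi_apply j).comp measurable_fst

lemma measurable_Phi {n : ℕ} (D : Measure Z) [SFinite D] (i : Fin n)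
    {φ : (Fin n → Z) → ℝ} (hφ : Measurable φ) :
    Measurable fun S => ∫ z, φ (Function.update S i z) ∂D := by
  have : StronglyMeasurable fun q : (Fin n → Z) × Z => φ (Function.update q.1 i q.2) :=
    (hφ.comp (measurable_update_joint i)).stronglyMeasurable
  exact this.integral_prod_right'.measurable

lemma pi_unique_integral {ι : Type*} [Fintype ι] [Unique ι] (D : Measure Z) [SigmaFinite D]
    (f : Z → ℝ) :
    ∫ a : ι → Z, f (a default) ∂(Measure.pi fun _ : ι => D) = ∫ z, f z ∂D := by
  have h := measurePreserving_piUnique (fun _ : ι => D)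
  rw [← h.integral_comp' f]
  rfl

lemma pi_unique_integral_left {ι W : Type*} [Fintype ι] [Unique ι] [MeasurableSpace W]
    (D : Measure Z) [SigmaFinite D] (μ₂ : Measure W) [SigmaFinite μ₂]
    (f : (ι → Z) × W → ℝ) (hf : Integrable f ((Measure.pi fun _ : ι => D).prod μ₂)) :
    ∫ q, f q ∂((Measure.pi fun _ : ι => D).prod μ₂)
      = ∫ w, ∫ z, f ((fun _ => z), w) ∂D ∂μ₂ := by
  rw [integral_prod_symm f hf]
  congr 1
  funext w
  have h1 : (fun a : ι → Z => f (a, w)) = fun a => f ((fun _ => a default), w) := by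
    funext a
    congr 1
    rw [Prod.mk.injEq]
    refine ⟨?_, rfl⟩
    funext j; rw [Unique.eq_default j]
  rw [h1]
  exact pi_unique_integral D (fun z => f ((fun _ => z), w))

lemma prod_split {n : ℕ} (D : Measure Z) [IsProbabilityMeasure D] (i : Fin n)
    (φ : (Fin n → Z) → ℝ) (ψ : Z → ℝ) (hφ : Measurable φ) (hψ : Measurable ψ)
    (hφb : ∀ S, ‖φ S‖ ≤ 1) :
    ∫ S, (∫ z, φ (Function.update S i z) ∂D) * ψ (S i) ∂(Measure.pi fun _ : Fin n => D)
      = (∫ S, φ S ∂(Measure.pi fun _ : Fin n => D)) * ∫ z, ψ z ∂D := by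
  classical
  letI F1 : Fintype {j : Fin n // j = i} := Subtype.fintype _
  letI F2 : Fintype {j : Fin n // ¬ j = i} := Subtype.fintype _
  letI U1 : Unique {j : Fin n // j = i} := ⟨⟨⟨i, rfl⟩⟩, fun j => Subtype.ext j.2⟩
  set e := MeasurableEquiv.piEquivPiSubtypeProd (fun _ : Fin n => Z) (· = i) with he
  have MP := measurePreserving_piEquivPiSubtypeProd (fun _ : Fin n => D) (· = i)
  have hsymm : ∀ (a : {j : Fin n // j = i} → Z) (b : {j : Fin n // ¬ j = i} → Z) (j : Fin n),
      e.symm (a, b) j = if h : j = i then a ⟨j, h⟩ else b ⟨j, h⟩ := by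
    intro a b j
    rfl
  have claim2 : ∀ (a : {j : Fin n // j = i} → Z) (b : {j : Fin n // ¬ j = i} → Z) (z : Z),
      Function.update (e.symm (a, b)) i z = e.symm ((fun _ => z), b) := by
    intro a b z
    funext j
    by_cases h : j = i
    · subst h; rw [Function.update_self, hsymm, dif_pos rfl]
    · rw [Function.update_of_ne h, hsymm, hsymm, dif_neg h, dif_neg h]
  have key := MP.integral_comp'
    (fun q => ψ (q.1 default) * (∫ z, φ (e.symm ((fun _ => z), q.2)) ∂D))
  have lhs_eq : (fun S => ψ ((e S).1 default) * ∫ z, φ (e.symm ((fun _ => z), (e S).2)) ∂D)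
      = fun S => (∫ z, φ (Function.update S i z) ∂D) * ψ (S i) := by
    funext S
    rw [mul_comm]
    congr 1
    · congr 1
      funext z
      rw [← claim2 (e S).1 (e S).2 z, Prod.mk.eta, e.symm_apply_apply]
  rw [lhs_eq] at key
  rw [key]
  rw [integral_prod_mul (L := ℝ) (fun a : {x : Fin n // x = i} → Z => ψ (a default))
    (fun b : {x : Fin n // ¬ x = i} → Z => ∫ z, φ (e.symm ((fun _ => z), b)) ∂D)]
  have h3 := MP.integral_comp' (fun q => φ (e.symm q))
  simp only [show ∀ x, e.symm (MeasurableEquiv.piEquivPiSubtypeProd (fun _ : Fin n => Z) (· = i) x) = x from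
    fun x => e.symm_apply_apply x] at h3
  rw [mul_comm]
  congr 1
  · rw [h3]
    exact (pi_unique_integral_left D _ _
      (integrable_of_bdd (hφ.comp e.symm.measurable) (fun q => hφb _))).symm
  · exact pi_unique_integral D ψ

end Helpers


/-- Let `κ : Z^n → [n]^k` be the (`(ε,δ)`-DP) compression function
of an `(ε,δ)` sample DP `(n → k)`-compression scheme, `D` a probability
distribution over `Z` and `E ⊆ Z` an event with `p = D(E)`.  For
`S = (z_1,…,z_n) ~ D^n`, the expectation (over `S` and the internal randomness
of `κ`) of `Z(S) = (1/k)·∑_{i ∈ κ(S)} 1[z_i ∈ E]` satisfies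
`p·e^{−ε} − δ·n ≤ E[Z] ≤ p·e^{ε} + δ·n`. -/
theorem stmt2 {Z : Type*} [MeasurableSpace Z] (n k : ℕ) (hk : 0 < k)
    (ε δ : ℝ) (hε : 0 ≤ ε) (hδ : 0 ≤ δ)
    (κ : (Fin n → Z) → PMF (Fin k → Fin n))
    (hmeas : ∀ T : Set (Fin k → Fin n), Measurable fun S => prob (κ S) T)
    (hDP : ∀ S S', Neighbors S S' → ∀ T : Set (Fin k → Fin n),
      prob (κ S) T ≤ Real.exp ε * prob (κ S') T + δ)
    (D : Measure Z) [IsProbabilityMeasure D] (E : Set Z) (hE : MeasurableSet E)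
    (p : ℝ) (hp : p = (D E).toReal) :
    p * Real.exp (-ε) - δ * n ≤
      (∫ S, (∑ I : Fin k → Fin n, ((κ S) I).toReal *
          ((1 / (k:ℝ)) * ∑ j : Fin k, E.indicator (fun _ => (1:ℝ)) (S (I j))))
        ∂(Measure.pi fun _ : Fin n => D)) ∧
    (∫ S, (∑ I : Fin k → Fin n, ((κ S) I).toReal *
          ((1 / (k:ℝ)) * ∑ j : Fin k, E.indicator (fun _ => (1:ℝ)) (S (I j))))
        ∂(Measure.pi fun _ : Fin n => D))
      ≤ p * Real.exp ε + δ * n := by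
  classical
  have hexp1 : (1:ℝ) ≤ Real.exp ε := by
    calc (1:ℝ) = Real.exp 0 := (Real.exp_zero).symm
    _ ≤ Real.exp ε := Real.exp_le_exp.mpr hε
  have hexppos : (0:ℝ) < Real.exp ε := Real.exp_pos ε
  have hexpneg1 : Real.exp (-ε) ≤ 1 := by
    calc Real.exp (-ε) ≤ Real.exp 0 := Real.exp_le_exp.mpr (neg_nonpos.mpr hε)
    _ = 1 := Real.exp_zero
  have hp0 : 0 ≤ p := hp ▸ ENNReal.toReal_nonneg
  have hp1 : p ≤ 1 := by
    rw [hp]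
    calc (D E).toReal ≤ (D Set.univ).toReal :=
          ENNReal.toReal_mono (measure_ne_top _ _) (measure_mono (Set.subset_univ E))
    _ = 1 := by simp
  set μ := Measure.pi fun _ : Fin n => D with hμ
  set ind : Z → ℝ := E.indicator (fun _ => (1:ℝ)) with hind
  have hind0 : ∀ z, 0 ≤ ind z := fun z => Set.indicator_nonneg (fun _ _ => zero_le_one) z
  have hind1 : ∀ z, ind z ≤ 1 := fun z => by
    by_cases h : z ∈ E <;> simp [hind, Set.indicator_apply, h]
  have hindm : Measurable ind := measurable_const.indicator hE
  have hindnorm : ∀ z, ‖ind z‖ ≤ 1 := fun z => by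
    rw [Real.norm_eq_abs, abs_of_nonneg (hind0 z)]; exact hind1 z
  have hindint : ∫ z, ind z ∂D = p := by
    rw [hp, hind]
    exact integral_indicator_one hE
  set g : Fin k → Fin n → (Fin n → Z) → ℝ := fun j i S => prob (κ S) {I | I j = i} with hg
  have hgm : ∀ j i, Measurable (g j i) := fun j i => hmeas _
  have hg0 : ∀ j i S, 0 ≤ g j i S := fun j i S => prob_nonneg' _ _
  have hg1 : ∀ j i S, g j i S ≤ 1 := fun j i S => prob_le_one' _ _
  have hgnorm : ∀ j i S, ‖g j i S‖ ≤ 1 := fun j i S => by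
    rw [Real.norm_eq_abs, abs_of_nonneg (hg0 j i S)]; exact hg1 j i S
  have hgexp : ∀ j i S, g j i S
      = ∑ I ∈ Finset.univ.filter (fun I : Fin k → Fin n => I j = i), ((κ S) I).toReal := by
    intro j i S
    exact prob_eq_sum' (κ S) (fun I => I j = i)
  have hfiber : ∀ (j : Fin k) (F : (Fin k → Fin n) → ℝ),
      ∑ i : Fin n, ∑ I ∈ Finset.univ.filter (fun I : Fin k → Fin n => I j = i), F I
        = ∑ I : Fin k → Fin n, F I := by
    intro j F
    rw [Finset.sum_fiberwise_eq_sum_filter Finset.univ Finset.univ (fun I => I j) F]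
    simp
  have hgsum : ∀ j S, ∑ i : Fin n, g j i S = 1 := by
    intro j S
    simp_rw [hgexp j _ S]
    rw [hfiber j]
    exact sum_pmf_one (κ S)
  -- pointwise rewrite of the integrand
  have hpt : ∀ S : Fin n → Z,
      (∑ I : Fin k → Fin n, ((κ S) I).toReal * ((1 / (k:ℝ)) * ∑ j : Fin k, ind (S (I j))))
      = ∑ j : Fin k, (1/(k:ℝ)) * ∑ i : Fin n, g j i S * ind (S i) := by
    intro S
    calc (∑ I : Fin k → Fin n, ((κ S) I).toReal * ((1 / (k:ℝ)) * ∑ j : Fin k, ind (S (I j))))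
        = ∑ I : Fin k → Fin n, ∑ j : Fin k, (1/(k:ℝ)) * (((κ S) I).toReal * ind (S (I j))) := by
          apply Finset.sum_congr rfl
          intro I _
          rw [Finset.mul_sum, Finset.mul_sum]
          apply Finset.sum_congr rfl
          intro j _
          ring
      _ = ∑ j : Fin k, ∑ I : Fin k → Fin n, (1/(k:ℝ)) * (((κ S) I).toReal * ind (S (I j))) :=
          Finset.sum_comm
      _ = ∑ j : Fin k, (1/(k:ℝ)) * ∑ i : Fin n, g j i S * ind (S i) := by
          apply Finset.sum_congr rfl
          intro j _
          rw [Finset.mul_sum]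
          rw [← hfiber j (fun I => (1/(k:ℝ)) * (((κ S) I).toReal * ind (S (I j))))]
          apply Finset.sum_congr rfl
          intro i _
          rw [hgexp j i S, Finset.sum_mul, Finset.mul_sum]
          apply Finset.sum_congr rfl
          intro I hI
          rw [Finset.mem_filter] at hI
          rw [hI.2]
  -- integrability of basic pieces
  have int_gind : ∀ (j : Fin k) (i : Fin n), Integrable (fun S => g j i S * ind (S i)) μ :=
    fun j i => integrable_of_bdd ((hgm j i).mul (hindm.comp (measurable_pi_apply i)))
      (fun S => by
        rw [norm_mul]
        exact mul_le_one₀ (hgnorm j i S) (norm_nonneg _) (hindnorm _))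
  have int_g : ∀ (j : Fin k) (i : Fin n), Integrable (g j i) μ :=
    fun j i => integrable_of_bdd (hgm j i) (hgnorm j i)
  have int_ind : ∀ i : Fin n, Integrable (fun S => ind (S i)) μ :=
    fun i => integrable_of_bdd (hindm.comp (measurable_pi_apply i))
      (fun S => hindnorm _)
  have heval : ∀ i : Fin n, ∫ S, ind (S i) ∂μ = p := by
    intro i
    have h := prod_split D i (fun _ => (1:ℝ)) ind measurable_const hindm (by intro; simp)
    simp only [integral_const, probReal_univ, ENNReal.toReal_one, one_smul, one_mul] at h
    rw [hμ, h, hindint]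
  -- the core bounds for each (j, i)
  have main : ∀ (j : Fin k) (i : Fin n),
      Real.exp (-ε) * ((∫ S, g j i S ∂μ) * p) - δ * p ≤ ∫ S, g j i S * ind (S i) ∂μ ∧
      ∫ S, g j i S * ind (S i) ∂μ ≤ Real.exp ε * ((∫ S, g j i S ∂μ) * p) + δ * p := by
    intro j i
    set Φ : (Fin n → Z) → ℝ := fun S => ∫ z, g j i (Function.update S i z) ∂D with hΦ
    have hΦm : Measurable Φ := measurable_Phi D i (hgm j i)
    have hintz : ∀ S, Integrable (fun z => g j i (Function.update S i z)) D := fun S =>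
      integrable_of_bdd ((hgm j i).comp (measurable_update S)) (fun z => hgnorm j i _)
    have hΦ0 : ∀ S, 0 ≤ Φ S := fun S => integral_nonneg (fun z => hg0 j i _)
    have hΦ1 : ∀ S, Φ S ≤ 1 := fun S => by
      calc Φ S ≤ ∫ _, (1:ℝ) ∂D := integral_mono (hintz S) (integrable_const 1)
            (fun z => hg1 j i _)
      _ = 1 := by simp
    have hΦnorm : ∀ S, ‖Φ S‖ ≤ 1 := fun S => by
      rw [Real.norm_eq_abs, abs_of_nonneg (hΦ0 S)]; exact hΦ1 S
    have hub : ∀ S, g j i S ≤ Real.exp ε * Φ S + δ := by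
      intro S
      have h1 : ∀ z, g j i S ≤ Real.exp ε * g j i (Function.update S i z) + δ := by
        intro z
        by_cases hz : z = S i
        · subst hz
          rw [Function.update_eq_self]
          nlinarith [hg0 j i S, hg1 j i S]
        · refine hDP S (Function.update S i z) ⟨i, ?_, ?_⟩ _
          · rw [Function.update_self]
            exact fun hc => hz hc.symm
          · intro j' hj'
            rw [Function.update_of_ne hj']
      calc g j i S = ∫ _, g j i S ∂D := by simp
      _ ≤ ∫ z, (Real.exp ε * g j i (Function.update S i z) + δ) ∂D :=
          integral_mono (integrable_const _)
            (((hintz S).const_mul _).add (integrable_const _)) h1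
      _ = Real.exp ε * Φ S + δ := by
          rw [integral_add ((hintz S).const_mul _) (integrable_const _), integral_const_mul]
          simp [hΦ]
    have hdown : ∀ S, Φ S ≤ Real.exp ε * g j i S + δ := by
      intro S
      have h1 : ∀ z, g j i (Function.update S i z) ≤ Real.exp ε * g j i S + δ := by
        intro z
        by_cases hz : z = S i
        · subst hz
          rw [Function.update_eq_self]
          nlinarith [hg0 j i S, hg1 j i S]
        · refine hDP (Function.update S i z) S ⟨i, ?_, ?_⟩ _
          · rw [Function.update_self]
            exact fun hc => hz hc
          · intro j' hj'
            rw [Function.update_of_ne hj']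
      calc Φ S ≤ ∫ _, (Real.exp ε * g j i S + δ) ∂D :=
          integral_mono (hintz S) (integrable_const _) h1
      _ = Real.exp ε * g j i S + δ := by simp
    have hsplit : ∫ S, Φ S * ind (S i) ∂μ = (∫ S, g j i S ∂μ) * p := by
      have h := prod_split D i (g j i) ind (hgm j i) hindm (hgnorm j i)
      rw [hμ, h, hindint]
    have int_Φind : Integrable (fun S => Φ S * ind (S i)) μ :=
      integrable_of_bdd (hΦm.mul (hindm.comp (measurable_pi_apply i)))
        (fun S => by
          rw [norm_mul]
          exact mul_le_one₀ (hΦnorm S) (norm_nonneg _) (hindnorm _))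
    constructor
    · -- lower bound
      have hlow : ∫ S, (Φ S - δ) * ind (S i) ∂μ
          ≤ ∫ S, Real.exp ε * (g j i S * ind (S i)) ∂μ := by
        apply integral_mono
        · apply integrable_of_bdd
          · exact ((hΦm.sub measurable_const).mul (hindm.comp (measurable_pi_apply i)))
          · intro S
            rw [norm_mul]
            have h1 : ‖Φ S - δ‖ ≤ 1 + δ := by
              rw [Real.norm_eq_abs, abs_sub_le_iff]
              constructor <;> nlinarith [hΦ0 S, hΦ1 S]
            calc ‖Φ S - δ‖ * ‖ind (S i)‖ ≤ (1 + δ) * 1 := by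
                  apply mul_le_mul h1 (hindnorm _) (norm_nonneg _) (by linarith)
            _ = 1 + δ := by ring
        · exact (int_gind j i).const_mul _
        · intro S
          have h2 : Φ S - δ ≤ Real.exp ε * g j i S := by linarith [hdown S]
          calc (Φ S - δ) * ind (S i) ≤ (Real.exp ε * g j i S) * ind (S i) :=
                mul_le_mul_of_nonneg_right h2 (hind0 _)
          _ = Real.exp ε * (g j i S * ind (S i)) := by ring
      have hexpand : ∀ S, (Φ S - δ) * ind (S i) = Φ S * ind (S i) - δ * ind (S i) :=
        fun S => by ring
      simp_rw [hexpand] at hlow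
      rw [integral_sub int_Φind ((int_ind i).const_mul _), integral_const_mul,
        integral_const_mul, hsplit, heval i] at hlow
      -- hlow : B * p - δ * p ≤ exp ε * A
      set A := ∫ S, g j i S * ind (S i) ∂μ
      set B := ∫ S, g j i S ∂μ
      have h3 : Real.exp (-ε) * (B * p - δ * p) ≤ A := by
        have h4 := mul_le_mul_of_nonneg_left hlow (Real.exp_pos (-ε)).le
        calc Real.exp (-ε) * (B * p - δ * p) ≤ Real.exp (-ε) * (Real.exp ε * A) := h4
        _ = A := by rw [← mul_assoc, ← Real.exp_add, neg_add_cancel, Real.exp_zero, one_mul]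
      nlinarith [mul_nonneg hδ hp0]
    · -- upper bound
      calc ∫ S, g j i S * ind (S i) ∂μ
          ≤ ∫ S, (Real.exp ε * Φ S + δ) * ind (S i) ∂μ := by
            apply integral_mono (int_gind j i)
            · apply integrable_of_bdd
              · exact ((hΦm.const_mul _).add measurable_const).mul
                  (hindm.comp (measurable_pi_apply i))
              · intro S
                rw [norm_mul]
                have h1 : ‖Real.exp ε * Φ S + δ‖ ≤ Real.exp ε + δ := by
                  rw [Real.norm_eq_abs, abs_of_nonneg (by nlinarith [hΦ0 S])]
                  nlinarith [hΦ1 S, hΦ0 S]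
                calc ‖Real.exp ε * Φ S + δ‖ * ‖ind (S i)‖ ≤ (Real.exp ε + δ) * 1 :=
                      mul_le_mul h1 (hindnorm _) (norm_nonneg _) (by nlinarith)
                _ = Real.exp ε + δ := by ring
            · intro S
              exact mul_le_mul_of_nonneg_right (hub S) (hind0 _)
      _ = Real.exp ε * ((∫ S, g j i S ∂μ) * p) + δ * p := by
          have hexpand : ∀ S, (Real.exp ε * Φ S + δ) * ind (S i)
              = Real.exp ε * (Φ S * ind (S i)) + δ * ind (S i) := fun S => by ring
          simp_rw [hexpand]
          rw [integral_add (int_Φind.const_mul _) ((int_ind i).const_mul _),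
            integral_const_mul, integral_const_mul, hsplit, heval i]
  -- assemble
  have hBsum : ∀ j : Fin k, ∑ i : Fin n, ∫ S, g j i S ∂μ = 1 := by
    intro j
    rw [← integral_finset_sum _ (fun i _ => int_g j i)]
    simp_rw [hgsum j]
    simp
  have hB0 : ∀ j i, 0 ≤ ∫ S, g j i S ∂μ := fun j i => integral_nonneg (hg0 j i)
  have hAless : ∀ j : Fin k,
      ∑ i : Fin n, ∫ S, g j i S * ind (S i) ∂μ ≤ Real.exp ε * p + (n : ℝ) * (δ * p) := by
    intro j
    calc ∑ i : Fin n, ∫ S, g j i S * ind (S i) ∂μ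
        ≤ ∑ i : Fin n, (Real.exp ε * ((∫ S, g j i S ∂μ) * p) + δ * p) :=
          Finset.sum_le_sum (fun i _ => (main j i).2)
    _ = ∑ i : Fin n, ((Real.exp ε * p) * (∫ S, g j i S ∂μ) + δ * p) := by
        apply Finset.sum_congr rfl
        intros
        ring
    _ = Real.exp ε * p * (∑ i : Fin n, ∫ S, g j i S ∂μ) + (n : ℝ) * (δ * p) := by
        rw [Finset.sum_add_distrib, ← Finset.mul_sum, Finset.sum_const, Finset.card_univ,
          Fintype.card_fin, nsmul_eq_mul]
    _ = Real.exp ε * p + (n : ℝ) * (δ * p) := by rw [hBsum j, mul_one]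
  have hAgr : ∀ j : Fin k,
      Real.exp (-ε) * p - (n : ℝ) * (δ * p) ≤ ∑ i : Fin n, ∫ S, g j i S * ind (S i) ∂μ := by
    intro j
    calc Real.exp (-ε) * p - (n : ℝ) * (δ * p)
        = Real.exp (-ε) * p * (∑ i : Fin n, ∫ S, g j i S ∂μ) - (n : ℝ) * (δ * p) := by
          rw [hBsum j, mul_one]
    _ = ∑ i : Fin n, ((Real.exp (-ε) * p) * (∫ S, g j i S ∂μ) - δ * p) := by
        rw [Finset.sum_sub_distrib, ← Finset.mul_sum, Finset.sum_const, Finset.card_univ,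
          Fintype.card_fin, nsmul_eq_mul]
    _ = ∑ i : Fin n, (Real.exp (-ε) * ((∫ S, g j i S ∂μ) * p) - δ * p) := by
        apply Finset.sum_congr rfl
        intros
        ring
    _ ≤ ∑ i : Fin n, ∫ S, g j i S * ind (S i) ∂μ :=
        Finset.sum_le_sum (fun i _ => (main j i).1)
  -- compute the total integral
  have htotal : (∫ S, (∑ I : Fin k → Fin n, ((κ S) I).toReal *
          ((1 / (k:ℝ)) * ∑ j : Fin k, E.indicator (fun _ => (1:ℝ)) (S (I j)))) ∂μ)
      = ∑ j : Fin k, (1/(k:ℝ)) * ∑ i : Fin n, ∫ S, g j i S * ind (S i) ∂μ := by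
    have hrw : (fun S => (∑ I : Fin k → Fin n, ((κ S) I).toReal *
          ((1 / (k:ℝ)) * ∑ j : Fin k, E.indicator (fun _ => (1:ℝ)) (S (I j)))))
        = fun S => ∑ j : Fin k, (1/(k:ℝ)) * ∑ i : Fin n, g j i S * ind (S i) := by
      funext S
      exact hpt S
    rw [hrw]
    rw [integral_finset_sum _ (fun j _ => by
      apply Integrable.const_mul
      exact integrable_finset_sum _ (fun i _ => int_gind j i))]
    apply Finset.sum_congr rfl
    intro j _
    rw [integral_const_mul]
    congr 1
    exact integral_finset_sum _ (fun i _ => int_gind j i)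
  have hkpos : (0:ℝ) < (k:ℝ) := by exact_mod_cast hk
  have hknz : (k:ℝ) ≠ 0 := ne_of_gt hkpos
  have hnd : (n : ℝ) * (δ * p) ≤ δ * n := by
    have hn0 : (0:ℝ) ≤ (n:ℝ) := Nat.cast_nonneg n
    have h1 : 0 ≤ (n:ℝ) * δ * (1 - p) := by
      apply mul_nonneg (mul_nonneg hn0 hδ)
      linarith
    nlinarith
  constructor
  · rw [htotal]
    have hlb : ∑ j : Fin k, (1/(k:ℝ)) * ∑ i : Fin n, ∫ S, g j i S * ind (S i) ∂μ
        ≥ ∑ j : Fin k, (1/(k:ℝ)) * (Real.exp (-ε) * p - (n : ℝ) * (δ * p)) := by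
      apply Finset.sum_le_sum
      intro j _
      exact mul_le_mul_of_nonneg_left (hAgr j) (by positivity)
    have hconst : ∑ j : Fin k, (1/(k:ℝ)) * (Real.exp (-ε) * p - (n : ℝ) * (δ * p))
        = Real.exp (-ε) * p - (n : ℝ) * (δ * p) := by
      rw [Finset.sum_const, Finset.card_univ, Fintype.card_fin, nsmul_eq_mul]
      field_simp
    calc p * Real.exp (-ε) - δ * n ≤ Real.exp (-ε) * p - (n : ℝ) * (δ * p) := by nlinarith
    _ = ∑ j : Fin k, (1/(k:ℝ)) * (Real.exp (-ε) * p - (n : ℝ) * (δ * p)) := hconst.symm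
    _ ≤ ∑ j : Fin k, (1/(k:ℝ)) * ∑ i : Fin n, ∫ S, g j i S * ind (S i) ∂μ := hlb
  · rw [htotal]
    have hub2 : ∑ j : Fin k, (1/(k:ℝ)) * ∑ i : Fin n, ∫ S, g j i S * ind (S i) ∂μ
        ≤ ∑ j : Fin k, (1/(k:ℝ)) * (Real.exp ε * p + (n : ℝ) * (δ * p)) := by
      apply Finset.sum_le_sum
      intro j _
      exact mul_le_mul_of_nonneg_left (hAless j) (by positivity)
    have hconst : ∑ j : Fin k, (1/(k:ℝ)) * (Real.exp ε * p + (n : ℝ) * (δ * p))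
        = Real.exp ε * p + (n : ℝ) * (δ * p) := by
      rw [Finset.sum_const, Finset.card_univ, Fintype.card_fin, nsmul_eq_mul]
      field_simp
    calc ∑ j : Fin k, (1/(k:ℝ)) * ∑ i : Fin n, ∫ S, g j i S * ind (S i) ∂μ
        ≤ Real.exp ε * p + (n : ℝ) * (δ * p) := by rw [← hconst]; exact hub2
    _ ≤ p * Real.exp ε + δ * n := by nlinarith
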